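/- For a reaction network satisfying Assumptions 1 and 2, let V be an intermediate species with enzyme Ỹ in its connected component, and let Y be a non-intermediate species acting as an enzyme in a connected component whose set of substrates and products is 𝒮_V. Let X be a non-intermediate species with X ∈ 𝒮^{(α)} for some α ≥ 1 such that Y, Ỹ ∉ 𝒮^{(α)}. If a monomial y^r v appears in x^{(ℓ)} for some r ≥ 0 and ℓ ≥ 1, then X ∈ 𝒮_V. Moreover, either V reacts to X, or r ≥ 1, ℓ ≥ 2, and a monomial y^t v with t < r appears in z_w^{(i)} for some i ≤ ℓ−2, where Z_w is a species involved in a block of reactions Y+Z_w ⇄ W → Y + X of the network; if r ≥ 1 and ℓ is minimal with this property, then t = r−1. -/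

import Mathlib

open MvPolynomial Finsupp

variable {σ : Type*}

/-- The total (Lie) derivative of a polynomial `φ` associated to the polynomial vector
field `f`: `φ̇ = Σ_x (∂φ/∂x)·f x`. -/
noncomputable def lieD [Fintype σ] (f : σ → MvPolynomial σ ℝ)
    (φ : MvPolynomial σ ℝ) : MvPolynomial σ ℝ :=
  ∑ x : σ, MvPolynomial.pderiv x φ * f x

/-- Iterated total (Lie) derivative. -/
noncomputable def lieDIter [Fintype σ] (f : σ → MvPolynomial σ ℝ) :
    ℕ → MvPolynomial σ ℝ → MvPolynomial σ ℝ
  | 0, φ => φ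
  | n + 1, φ => lieD f (lieDIter f n φ)

/-- Indicator of a species inside a complex, as a real number. -/
def ind [DecidableEq σ] (a x : σ) : ℝ := if a = x then 1 else 0

/-- A chemical reaction network of the structural form of Assumption 1: the connected
components are indexed by `ι`; component `i` is
`Y i + S i 0 ⇄ U i 1 → Y i + S i 1 ⇄ U i 2 → ⋯ ⇄ U i (L i) → Y i + S i (L i)`,
with rate constants `a_{i,j}, b_{i,j}, c_{i,j}` for the reactions
`Y i + S i (j-1) → U i j`, `U i j → Y i + S i (j-1)`, `U i j → Y i + S i j`
(`1 ≤ j ≤ L i`). Only the values `S i j` for `j ≤ L i` and `U i j` for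
`1 ≤ j ≤ L i` are relevant. -/
structure A1Network (σ : Type*) where
  ι : Type
  [fintypeι : Fintype ι]
  L : ι → ℕ
  Lpos : ∀ i, 1 ≤ L i
  Y : ι → σ
  S : ι → ℕ → σ
  U : ι → ℕ → σ

attribute [instance] A1Network.fintypeι

namespace A1Network

variable [Fintype σ] [DecidableEq σ]

/-- Rate-constant index: component `i`, block `j+1` (for `j : Fin (L i)`), and
`0, 1, 2` for the constants `a, b, c` of the block. -/
def Param (N : A1Network σ) : Type := (i : N.ι) × Fin (N.L i) × Fin 3

instance (N : A1Network σ) : Fintype N.Param :=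
  inferInstanceAs (Fintype ((i : N.ι) × Fin (N.L i) × Fin 3))

/-- `x` is an intermediate species of the network. -/
def inter (N : A1Network σ) (x : σ) : Prop :=
  ∃ i, ∃ j : Fin (N.L i), x = N.U i ((j : ℕ) + 1)

/-- The non-intermediate `x₁` reacts with the non-intermediate `x₂`
(a reaction `x₁ + x₂ → U` exists). -/
def reactsWith (N : A1Network σ) (x₁ x₂ : σ) : Prop :=
  ∃ i, ∃ j : Fin (N.L i),
    (x₁ = N.Y i ∧ x₂ = N.S i (j : ℕ)) ∨ (x₂ = N.Y i ∧ x₁ = N.S i (j : ℕ))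

/-- The intermediate `u` reacts to the non-intermediate `x`
(a reaction `u → x + X₂` exists). -/
def reactsTo (N : A1Network σ) (u x : σ) : Prop :=
  ∃ i, ∃ j : Fin (N.L i), u = N.U i ((j : ℕ) + 1) ∧
    (x = N.Y i ∨ x = N.S i (j : ℕ) ∨ x = N.S i ((j : ℕ) + 1))

/-- The distinctness/uniqueness requirements of Assumption 1: the intermediates of the
entire network are pairwise distinct and distinct from all non-intermediates; the
non-intermediates of one component are pairwise distinct; each complex lies in a
unique connected component. -/
structure Assumption1 (N : A1Network σ) : Prop where
  U_inj : ∀ i (j : Fin (N.L i)) i' (j' : Fin (N.L i')),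
    N.U i ((j : ℕ) + 1) = N.U i' ((j' : ℕ) + 1) → i = i' ∧ (j : ℕ) = (j' : ℕ)
  U_ne_Y : ∀ i (j : Fin (N.L i)) i', N.U i ((j : ℕ) + 1) ≠ N.Y i'
  U_ne_S : ∀ i (j : Fin (N.L i)) i' j', j' ≤ N.L i' → N.U i ((j : ℕ) + 1) ≠ N.S i' j'
  S_inj : ∀ i j j', j ≤ N.L i → j' ≤ N.L i → N.S i j = N.S i j' → j = j'
  complex_unique : ∀ i i' j j', j ≤ N.L i → j' ≤ N.L i' →
    (∀ x : σ, ind (N.Y i) x + ind (N.S i j) x = ind (N.Y i') x + ind (N.S i' j') x) →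
    i = i'

/-- `part` is a partition of the species as in Assumption 2: intermediates form class `0`;
all the substrates and products of a component lie in one class `α ≥ 1` which contains
neither the enzyme of the component nor any intermediate. -/
def IsPartition (N : A1Network σ) (part : σ → ℕ) : Prop :=
  (∀ x, N.inter x → part x = 0) ∧
  (∀ i : N.ι, ∃ α, 1 ≤ α ∧ (∀ j, j ≤ N.L i → part (N.S i j) = α) ∧
    part (N.Y i) ≠ α ∧ part (N.Y i) ≠ 0)

/-- Assumption 2: there exists a partition as above. -/
def Assumption2 (N : A1Network σ) : Prop := ∃ part, N.IsPartition part

/-- The mass-action right-hand side of the induced dynamical system: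
`ẋ = Σ_{y→y'} k_{yy'} x^y (y'-y)`. -/
noncomputable def rhs (N : A1Network σ) (k : N.Param → ℝ) (x : σ) : MvPolynomial σ ℝ :=
  ∑ i : N.ι, ∑ j : Fin (N.L i),
    (C (k ⟨i, j, 0⟩ *
          (ind (N.U i ((j : ℕ) + 1)) x - ind (N.Y i) x - ind (N.S i (j : ℕ)) x)) *
        (X (N.Y i) * X (N.S i (j : ℕ)))
      + C (k ⟨i, j, 1⟩ *
          (ind (N.Y i) x + ind (N.S i (j : ℕ)) x - ind (N.U i ((j : ℕ) + 1)) x)) *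
        X (N.U i ((j : ℕ) + 1))
      + C (k ⟨i, j, 2⟩ *
          (ind (N.Y i) x + ind (N.S i ((j : ℕ) + 1)) x - ind (N.U i ((j : ℕ) + 1)) x)) *
        X (N.U i ((j : ℕ) + 1)))

/-- `x^{(ℓ)}(x, k)`: the `ℓ`-th iterated total derivative of the variable `x`. -/
noncomputable def deriv (N : A1Network σ) (k : N.Param → ℝ) (ℓ : ℕ) (x : σ) :
    MvPolynomial σ ℝ :=
  lieDIter (N.rhs k) ℓ (X x)

/-- The map `ψ` on rate constants is identifiable from the set of variables `T` with `D`
derivatives: whenever two positive rate vectors give the same derivatives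
`x^{(ℓ)}`, `1 ≤ ℓ ≤ D`, `x ∈ T`, as polynomials, the values of `ψ` agree. -/
def IdentifiableFrom {α : Type*} (N : A1Network σ) (ψ : (N.Param → ℝ) → α)
    (T : Set σ) (D : ℕ) : Prop :=
  ∀ k₁ k₂ : N.Param → ℝ, (∀ r, 0 < k₁ r) → (∀ r, 0 < k₂ r) →
    (∀ x ∈ T, ∀ ℓ, 1 ≤ ℓ → ℓ ≤ D → N.deriv k₁ ℓ x = N.deriv k₂ ℓ x) →
    ψ k₁ = ψ k₂


/-! ### Auxiliary infrastructure for the main lemma -/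

set_option linter.unusedSectionVars false

section CoeffLemmas

lemma coeff_pderiv' (i : σ) (m : σ →₀ ℕ) (φ : MvPolynomial σ ℝ) :
    coeff m (pderiv i φ) = ((m i : ℝ) + 1) * coeff (m + Finsupp.single i 1) φ := by
  induction φ using MvPolynomial.induction_on' with
  | add p q hp hq => simp only [map_add, coeff_add, hp, hq]; ring
  | monomial s a =>
    rw [pderiv_monomial, coeff_monomial, coeff_monomial]
    by_cases hle : Finsupp.single i 1 ≤ s
    · have hkey : s - Finsupp.single i 1 = m ↔ s = m + Finsupp.single i 1 :=
        tsub_eq_iff_eq_add_of_le hle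
      split_ifs with h h2 h2
      · have : s i = m i + 1 := by
          rw [h2]; simp [Finsupp.add_apply, Finsupp.single_apply]
        rw [this]; push_cast; ring
      · exact absurd (hkey.mp h) h2
      · exact absurd (hkey.mpr h2) h
      · ring
    · have hsi : s i = 0 := by
        by_contra hne
        exact hle (Finsupp.single_le_iff.mpr (Nat.one_le_iff_ne_zero.mpr hne))
      have h2 : s ≠ m + Finsupp.single i 1 := fun h => hle (h ▸ le_add_self)
      rw [if_neg h2, mul_zero]
      split_ifs with h
      · rw [hsi]; simp
      · rfl

lemma coeff_mul_XX (p : MvPolynomial σ ℝ) (a b : σ) (d : σ →₀ ℕ) :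
    coeff d (p * (X a * X b)) =
      if b ∈ d.support then
        (if a ∈ (d - Finsupp.single b 1).support then
          coeff (d - Finsupp.single b 1 - Finsupp.single a 1) p else 0)
      else 0 := by
  rw [← mul_assoc, coeff_mul_X']
  by_cases h : b ∈ d.support
  · rw [if_pos h, if_pos h, coeff_mul_X']
  · rw [if_neg h, if_neg h]

lemma sum_ind_mul [Fintype σ] (g : σ → ℝ) (a : σ) :
    ∑ z : σ, ind a z * g z = g a := by
  simp only [ind, ite_mul, one_mul, zero_mul]
  simp

lemma mem_support_yz {y z a : σ} (n : ℕ) (hzy : z ≠ y) :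
    a ∈ (Finsupp.single y n + Finsupp.single z 1).support ↔ (a = y ∧ 1 ≤ n) ∨ a = z := by
  rcases eq_or_ne a y with rfl | hay
  · have h1 : ((Finsupp.single a n + Finsupp.single z 1 : σ →₀ ℕ)) a = n := by
      rw [Finsupp.add_apply, Finsupp.single_eq_same, Finsupp.single_eq_of_ne' hzy, add_zero]
    rw [Finsupp.mem_support_iff, h1]
    simp [Nat.one_le_iff_ne_zero, hzy.symm]
  · rcases eq_or_ne a z with rfl | haz
    · simp [Finsupp.mem_support_iff, Finsupp.add_apply, Finsupp.single_apply, Ne.symm hay]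
    · simp [Finsupp.mem_support_iff, Finsupp.add_apply, Finsupp.single_apply, Ne.symm hay,
        Ne.symm haz, hay, haz]

lemma mem_support_y {y a : σ} (n : ℕ) :
    a ∈ (Finsupp.single y n : σ →₀ ℕ).support ↔ a = y ∧ 1 ≤ n := by
  rcases eq_or_ne a y with rfl | hay
  · simp [Finsupp.mem_support_iff, Nat.one_le_iff_ne_zero]
  · simp [Finsupp.mem_support_iff, Finsupp.single_apply, Ne.symm hay, hay]

lemma sub_yz_z {y z : σ} (n : ℕ) :
    (Finsupp.single y n + Finsupp.single z 1) - Finsupp.single z 1 = Finsupp.single y n :=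
  add_tsub_cancel_right _ _

lemma sub_yz_y {y z : σ} (n : ℕ) (hn : 1 ≤ n) :
    (Finsupp.single y n + Finsupp.single z 1) - Finsupp.single y 1
      = Finsupp.single y (n-1) + Finsupp.single z 1 := by
  conv_lhs => rw [show n = (n-1) + 1 by omega, Finsupp.single_add,
    add_right_comm, add_tsub_cancel_right]

lemma sub_y_y {y : σ} (n : ℕ) :
    (Finsupp.single y n : σ →₀ ℕ) - Finsupp.single y 1 = Finsupp.single y (n-1) := by
  rw [← Finsupp.single_tsub]

lemma pieceXX (c0 : ℝ) (a b z : σ) (φ : MvPolynomial σ ℝ) (d : σ →₀ ℕ) :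
    coeff d (pderiv z φ * (C c0 * (X a * X b))) =
      c0 * (if b ∈ d.support then
        (if a ∈ (d - Finsupp.single b 1).support then
          (((d - Finsupp.single b 1 - Finsupp.single a 1 : σ →₀ ℕ) z : ℝ) + 1) *
            coeff ((d - Finsupp.single b 1 - Finsupp.single a 1) + Finsupp.single z 1) φ
         else 0) else 0) := by
  rw [mul_left_comm, coeff_C_mul, coeff_mul_XX]
  congr 1
  split_ifs with h h2
  · rw [coeff_pderiv']
  · rfl
  · rfl

lemma pieceX (c0 : ℝ) (u z : σ) (φ : MvPolynomial σ ℝ) (d : σ →₀ ℕ) :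
    coeff d (pderiv z φ * (C c0 * X u)) =
      c0 * (if u ∈ d.support then
        (((d - Finsupp.single u 1 : σ →₀ ℕ) z : ℝ) + 1) *
          coeff ((d - Finsupp.single u 1) + Finsupp.single z 1) φ
       else 0) := by
  rw [mul_left_comm, coeff_C_mul, coeff_mul_X']
  congr 1
  split_ifs with h
  · rw [coeff_pderiv']
  · rfl

end CoeffLemmas

section Recursions

variable {N : A1Network σ} (k : N.Param → ℝ)

/-- Master formula for the coefficient of a monomial in the Lie derivative. -/
lemma coeff_lieD_rhs (φ : MvPolynomial σ ℝ) (d : σ →₀ ℕ) :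
    coeff d (lieD (N.rhs k) φ) =
      ∑ z : σ, ∑ i : N.ι, ∑ j : Fin (N.L i),
        (k ⟨i,j,0⟩ * (ind (N.U i ((j:ℕ)+1)) z - ind (N.Y i) z - ind (N.S i (j:ℕ)) z) *
           (if N.S i (j:ℕ) ∈ d.support then
              (if N.Y i ∈ (d - Finsupp.single (N.S i (j:ℕ)) 1).support then
                (((d - Finsupp.single (N.S i (j:ℕ)) 1 - Finsupp.single (N.Y i) 1 : σ →₀ ℕ) z : ℝ) + 1) *
                  coeff ((d - Finsupp.single (N.S i (j:ℕ)) 1 - Finsupp.single (N.Y i) 1)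
                    + Finsupp.single z 1) φ
               else 0) else 0)
         + (k ⟨i,j,1⟩ * (ind (N.Y i) z + ind (N.S i (j:ℕ)) z - ind (N.U i ((j:ℕ)+1)) z)
            + k ⟨i,j,2⟩ * (ind (N.Y i) z + ind (N.S i ((j:ℕ)+1)) z - ind (N.U i ((j:ℕ)+1)) z)) *
           (if N.U i ((j:ℕ)+1) ∈ d.support then
              (((d - Finsupp.single (N.U i ((j:ℕ)+1)) 1 : σ →₀ ℕ) z : ℝ) + 1) *
                coeff ((d - Finsupp.single (N.U i ((j:ℕ)+1)) 1) + Finsupp.single z 1) φ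
            else 0)) := by
  rw [lieD, coeff_sum]
  refine Finset.sum_congr rfl fun z _ => ?_
  rw [rhs, Finset.mul_sum, coeff_sum]
  refine Finset.sum_congr rfl fun i _ => ?_
  rw [Finset.mul_sum, coeff_sum]
  refine Finset.sum_congr rfl fun j _ => ?_
  rw [mul_add, mul_add, coeff_add, coeff_add, pieceXX, pieceX, pieceX]
  ring

lemma sum_tri [Fintype σ] (c : ℝ) (a b b' : σ) (g : σ → ℝ) :
    ∑ z : σ, c * (ind a z - ind b z - ind b' z) * g z = c * (g a - g b - g b') := by
  have h : ∀ z : σ, c * (ind a z - ind b z - ind b' z) * g z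
      = c * (ind a z * g z) - c * (ind b z * g z) - c * (ind b' z * g z) := fun z => by ring
  rw [Finset.sum_congr rfl fun z _ => h z, Finset.sum_sub_distrib, Finset.sum_sub_distrib,
    ← Finset.mul_sum, ← Finset.mul_sum, ← Finset.mul_sum, sum_ind_mul, sum_ind_mul, sum_ind_mul]
  ring

lemma sum_tri_add [Fintype σ] (c : ℝ) (a b u : σ) (g : σ → ℝ) :
    ∑ z : σ, c * (ind a z + ind b z - ind u z) * g z = c * (g a + g b - g u) := by
  have h : ∀ z : σ, c * (ind a z + ind b z - ind u z) * g z
      = c * (ind a z * g z) + c * (ind b z * g z) - c * (ind u z * g z) := fun z => by ring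
  rw [Finset.sum_congr rfl fun z _ => h z, Finset.sum_sub_distrib, Finset.sum_add_distrib,
    ← Finset.mul_sum, ← Finset.mul_sum, ← Finset.mul_sum, sum_ind_mul, sum_ind_mul, sum_ind_mul]
  ring

/-- The weighted coefficient function appearing in the recursions. -/
noncomputable def Tf (y : σ) (φ : MvPolynomial σ ℝ) (n : ℕ) (a : σ) : ℝ :=
  (((Finsupp.single y n : σ →₀ ℕ) a : ℝ) + 1) *
    coeff (Finsupp.single y n + Finsupp.single a 1) φ

lemma Tf_of_ne {y a : σ} (h : y ≠ a) (φ : MvPolynomial σ ℝ) (n : ℕ) :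
    Tf y φ n a = coeff (Finsupp.single y n + Finsupp.single a 1) φ := by
  rw [Tf, Finsupp.single_eq_of_ne' h]
  simp

lemma Tf_self {y : σ} (φ : MvPolynomial σ ℝ) {n : ℕ} (hn : 1 ≤ n) :
    Tf y φ (n-1) y = (n : ℝ) * coeff (Finsupp.single y n) φ := by
  rw [Tf, Finsupp.single_eq_same, ← Finsupp.single_add]
  have h1 : n - 1 + 1 = n := by omega
  have h2 : ((n-1 : ℕ) : ℝ) + 1 = (n : ℝ) := by
    rw [Nat.cast_sub hn]; push_cast; ring
  rw [h1, h2]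

variable {y w : σ}

lemma U_ne' (h1 : N.Assumption1) (hyn : ¬ N.inter y) (i : N.ι) (j : Fin (N.L i)) :
    N.U i ((j:ℕ)+1) ≠ y := fun h => hyn ⟨i, j, h.symm⟩

/-- Recursion at an intermediate-containing monomial. -/
lemma coeff_rec_int (h1 : N.Assumption1)
    (hYS : ∀ i (j : ℕ), j ≤ N.L i → N.Y i ≠ N.S i j)
    (hyn : ¬ N.inter y) (φ : MvPolynomial σ ℝ) (n : ℕ) (i₀ : N.ι) (j₀ : Fin (N.L i₀)) :
    coeff (Finsupp.single y n + Finsupp.single (N.U i₀ ((j₀:ℕ)+1)) 1) (lieD (N.rhs k) φ)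
      = k ⟨i₀,j₀,1⟩ * (Tf y φ n (N.Y i₀) + Tf y φ n (N.S i₀ (j₀:ℕ))
          - Tf y φ n (N.U i₀ ((j₀:ℕ)+1)))
      + k ⟨i₀,j₀,2⟩ * (Tf y φ n (N.Y i₀) + Tf y φ n (N.S i₀ ((j₀:ℕ)+1))
          - Tf y φ n (N.U i₀ ((j₀:ℕ)+1))) := by
  have hz₀y : N.U i₀ ((j₀:ℕ)+1) ≠ y := U_ne' h1 hyn i₀ j₀
  set z₀ := N.U i₀ ((j₀:ℕ)+1) with hz₀
  set d := Finsupp.single y n + Finsupp.single z₀ 1 with hd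
  have hAzero : ∀ (z : σ) i (j : Fin (N.L i)),
      (if N.S i (j:ℕ) ∈ d.support then
        (if N.Y i ∈ (d - Finsupp.single (N.S i (j:ℕ)) 1).support then
          (((d - Finsupp.single (N.S i (j:ℕ)) 1 - Finsupp.single (N.Y i) 1 : σ →₀ ℕ) z : ℝ) + 1) *
            coeff ((d - Finsupp.single (N.S i (j:ℕ)) 1 - Finsupp.single (N.Y i) 1)
              + Finsupp.single z 1) φ
         else 0) else 0) = 0 := by
    intro z i j
    by_cases hs : N.S i (j:ℕ) ∈ d.support
    · have hsy : N.S i (j:ℕ) = y ∧ 1 ≤ n := by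
        rcases (mem_support_yz n hz₀y).mp hs with h | h
        · exact h
        · exact absurd h.symm (h1.U_ne_S i₀ j₀ i (j:ℕ) j.isLt.le)
      have hY : N.Y i ∉ (d - Finsupp.single (N.S i (j:ℕ)) 1).support := by
        rw [hsy.1, hd, sub_yz_y n hsy.2, mem_support_yz (n-1) hz₀y]
        rintro (⟨hYy, -⟩ | hYz)
        · exact hYS i (j:ℕ) j.isLt.le (hYy.trans hsy.1.symm)
        · exact h1.U_ne_Y i₀ j₀ i hYz.symm
      rw [if_pos hs, if_neg hY]
    · rw [if_neg hs]
  have hUmem : ∀ i (j : Fin (N.L i)),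
      N.U i ((j:ℕ)+1) ∈ d.support ↔ (i = i₀ ∧ (j:ℕ) = (j₀:ℕ)) := by
    intro i j
    rw [hd, mem_support_yz n hz₀y]
    constructor
    · rintro (⟨h, -⟩ | h)
      · exact absurd h (U_ne' h1 hyn i j)
      · exact h1.U_inj i j i₀ j₀ h
    · rintro ⟨rfl, h⟩
      exact Or.inr (by rw [h])
  rw [coeff_lieD_rhs]
  have hred : ∀ z : σ, (∑ i : N.ι, ∑ j : Fin (N.L i),
      (k ⟨i,j,0⟩ * (ind (N.U i ((j:ℕ)+1)) z - ind (N.Y i) z - ind (N.S i (j:ℕ)) z) *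
         (if N.S i (j:ℕ) ∈ d.support then
            (if N.Y i ∈ (d - Finsupp.single (N.S i (j:ℕ)) 1).support then
              (((d - Finsupp.single (N.S i (j:ℕ)) 1 - Finsupp.single (N.Y i) 1 : σ →₀ ℕ) z : ℝ) + 1) *
                coeff ((d - Finsupp.single (N.S i (j:ℕ)) 1 - Finsupp.single (N.Y i) 1)
                  + Finsupp.single z 1) φ
             else 0) else 0)
       + (k ⟨i,j,1⟩ * (ind (N.Y i) z + ind (N.S i (j:ℕ)) z - ind (N.U i ((j:ℕ)+1)) z)
          + k ⟨i,j,2⟩ * (ind (N.Y i) z + ind (N.S i ((j:ℕ)+1)) z - ind (N.U i ((j:ℕ)+1)) z)) *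
         (if N.U i ((j:ℕ)+1) ∈ d.support then
            (((d - Finsupp.single (N.U i ((j:ℕ)+1)) 1 : σ →₀ ℕ) z : ℝ) + 1) *
              coeff ((d - Finsupp.single (N.U i ((j:ℕ)+1)) 1) + Finsupp.single z 1) φ
          else 0)))
      = (k ⟨i₀,j₀,1⟩ * (ind (N.Y i₀) z + ind (N.S i₀ (j₀:ℕ)) z - ind z₀ z)
          + k ⟨i₀,j₀,2⟩ * (ind (N.Y i₀) z + ind (N.S i₀ ((j₀:ℕ)+1)) z - ind z₀ z)) *
          ((((Finsupp.single y n : σ →₀ ℕ) z : ℝ) + 1) *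
            coeff (Finsupp.single y n + Finsupp.single z 1) φ) := by
    intro z
    rw [Finset.sum_eq_single i₀]
    · rw [Finset.sum_eq_single j₀]
      · rw [hAzero, mul_zero, zero_add, if_pos ((hUmem i₀ j₀).mpr ⟨rfl, rfl⟩)]
        have : d - Finsupp.single z₀ 1 = Finsupp.single y n := by rw [hd, sub_yz_z]
        rw [← hz₀, this]
      · intro j _ hj
        rw [hAzero, mul_zero, zero_add]
        have : N.U i₀ ((j:ℕ)+1) ∉ d.support := by
          rw [hUmem]
          rintro ⟨-, h⟩
          exact hj (Fin.ext h)
        rw [if_neg this, mul_zero]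
      · intro h; exact absurd (Finset.mem_univ j₀) h
    · intro i _ hi
      refine Finset.sum_eq_zero fun j _ => ?_
      rw [hAzero, mul_zero, zero_add]
      have : N.U i ((j:ℕ)+1) ∉ d.support := by
        rw [hUmem]; rintro ⟨h, -⟩; exact hi h
      rw [if_neg this, mul_zero]
    · intro h; exact absurd (Finset.mem_univ i₀) h
  rw [Finset.sum_congr rfl fun z _ => hred z]
  have expand : ∀ z : σ,
      (k ⟨i₀,j₀,1⟩ * (ind (N.Y i₀) z + ind (N.S i₀ (j₀:ℕ)) z - ind z₀ z)
        + k ⟨i₀,j₀,2⟩ * (ind (N.Y i₀) z + ind (N.S i₀ ((j₀:ℕ)+1)) z - ind z₀ z)) *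
        ((((Finsupp.single y n : σ →₀ ℕ) z : ℝ) + 1) *
          coeff (Finsupp.single y n + Finsupp.single z 1) φ)
      = k ⟨i₀,j₀,1⟩ * (ind (N.Y i₀) z + ind (N.S i₀ (j₀:ℕ)) z - ind z₀ z) * (Tf y φ n z)
        + k ⟨i₀,j₀,2⟩ * (ind (N.Y i₀) z + ind (N.S i₀ ((j₀:ℕ)+1)) z - ind z₀ z) * (Tf y φ n z) :=
    fun z => by rw [Tf]; ring
  rw [Finset.sum_congr rfl fun z _ => expand z, Finset.sum_add_distrib,
    sum_tri_add, sum_tri_add]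

/-- Recursion at a pure power of `y`. -/
lemma coeff_rec_pure (h1 : N.Assumption1)
    (hYS : ∀ i (j : ℕ), j ≤ N.L i → N.Y i ≠ N.S i j)
    (hyn : ¬ N.inter y) (φ : MvPolynomial σ ℝ) (n : ℕ) :
    coeff (Finsupp.single y n) (lieD (N.rhs k) φ) = 0 := by
  rw [coeff_lieD_rhs]
  refine Finset.sum_eq_zero fun z _ => Finset.sum_eq_zero fun i _ =>
    Finset.sum_eq_zero fun j _ => ?_
  have hU : N.U i ((j:ℕ)+1) ∉ (Finsupp.single y n : σ →₀ ℕ).support := by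
    rw [mem_support_y]; rintro ⟨h, -⟩; exact U_ne' h1 hyn i j h
  rw [if_neg hU, mul_zero, add_zero]
  by_cases hs : N.S i (j:ℕ) ∈ (Finsupp.single y n : σ →₀ ℕ).support
  · obtain ⟨hSy, hn⟩ := (mem_support_y n).mp hs
    have hY : N.Y i ∉ ((Finsupp.single y n : σ →₀ ℕ) - Finsupp.single (N.S i (j:ℕ)) 1).support := by
      rw [hSy, sub_y_y, mem_support_y]
      rintro ⟨hYy, -⟩
      exact hYS i (j:ℕ) j.isLt.le (hYy.trans hSy.symm)
    rw [if_pos hs, if_neg hY, mul_zero]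
  · rw [if_neg hs, mul_zero]

/-- Recursion at a non-intermediate monomial. -/
lemma coeff_rec_nonint (h1 : N.Assumption1)
    (hYS : ∀ i (j : ℕ), j ≤ N.L i → N.Y i ≠ N.S i j)
    (hyn : ¬ N.inter y) (hwn : ¬ N.inter w) (hwy : w ≠ y)
    (φ : MvPolynomial σ ℝ) (n : ℕ) :
    coeff (Finsupp.single y n + Finsupp.single w 1) (lieD (N.rhs k) φ)
      = ∑ i : N.ι, ∑ j : Fin (N.L i),
          (if ((N.Y i = y ∧ N.S i (j:ℕ) = w) ∨ (N.Y i = w ∧ N.S i (j:ℕ) = y)) ∧ 1 ≤ n then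
            k ⟨i,j,0⟩ * (coeff (Finsupp.single y (n-1) + Finsupp.single (N.U i ((j:ℕ)+1)) 1) φ
              - coeff (Finsupp.single y (n-1) + Finsupp.single w 1) φ
              - (n:ℝ) * coeff (Finsupp.single y n) φ)
          else 0) := by
  set d := Finsupp.single y n + Finsupp.single w 1 with hd
  rw [coeff_lieD_rhs, Finset.sum_comm]
  refine Finset.sum_congr rfl fun i _ => ?_
  rw [Finset.sum_comm]
  refine Finset.sum_congr rfl fun j _ => ?_
  have hU : N.U i ((j:ℕ)+1) ∉ d.support := by
    rw [hd, mem_support_yz n hwy]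
    rintro (⟨h, -⟩ | h)
    · exact U_ne' h1 hyn i j h
    · exact hwn ⟨i, j, h.symm⟩
  have hUy : y ≠ N.U i ((j:ℕ)+1) := (U_ne' h1 hyn i j).symm
  have hYSij : N.Y i ≠ N.S i (j:ℕ) := hYS i (j:ℕ) j.isLt.le
  by_cases hs : N.S i (j:ℕ) ∈ d.support
  · rcases (mem_support_yz n hwy).mp hs with hSy | hSw
    · -- S i j = y (and 1 ≤ n); orientation Y i = w
      have hsub : d - Finsupp.single (N.S i (j:ℕ)) 1
          = Finsupp.single y (n-1) + Finsupp.single w 1 := by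
        rw [hSy.1, hd, sub_yz_y n hSy.2]
      by_cases hY : N.Y i = w
      · have hYmem : N.Y i ∈ (d - Finsupp.single (N.S i (j:ℕ)) 1).support := by
          rw [hsub, mem_support_yz (n-1) hwy]; exact Or.inr hY
        have hsub2 : d - Finsupp.single (N.S i (j:ℕ)) 1 - Finsupp.single (N.Y i) 1
            = Finsupp.single y (n-1) := by rw [hsub, hY, sub_yz_z]
        rw [Finset.sum_congr rfl fun z _ => by
          rw [if_pos hs, if_pos hYmem, if_neg hU, mul_zero, add_zero, hsub2]]
        have hcond : ((N.Y i = y ∧ N.S i (j:ℕ) = w) ∨ (N.Y i = w ∧ N.S i (j:ℕ) = y)) ∧ 1 ≤ n :=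
          ⟨Or.inr ⟨hY, hSy.1⟩, hSy.2⟩
        rw [if_pos hcond]
        have : ∀ z : σ, k ⟨i,j,0⟩ *
              (ind (N.U i ((j:ℕ)+1)) z - ind (N.Y i) z - ind (N.S i (j:ℕ)) z) *
              ((((Finsupp.single y (n-1) : σ →₀ ℕ) z : ℝ) + 1) *
                coeff (Finsupp.single y (n-1) + Finsupp.single z 1) φ)
            = k ⟨i,j,0⟩ *
              (ind (N.U i ((j:ℕ)+1)) z - ind (N.Y i) z - ind (N.S i (j:ℕ)) z) *
              Tf y φ (n-1) z := fun z => by rw [Tf]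
        rw [Finset.sum_congr rfl fun z _ => this z, sum_tri, hY, hSy.1,
          Tf_of_ne hUy, Tf_of_ne (Ne.symm hwy), Tf_self φ hSy.2]
      · have hYmem : N.Y i ∉ (d - Finsupp.single (N.S i (j:ℕ)) 1).support := by
          rw [hsub, mem_support_yz (n-1) hwy]
          rintro (⟨hYy, -⟩ | h)
          · exact hYSij (hYy.trans hSy.1.symm)
          · exact hY h
        have hcond : ¬ (((N.Y i = y ∧ N.S i (j:ℕ) = w) ∨ (N.Y i = w ∧ N.S i (j:ℕ) = y)) ∧ 1 ≤ n) := by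
          rintro ⟨h | h, -⟩
          · exact hwy (h.2.symm.trans hSy.1)
          · exact hY h.1
        rw [if_neg hcond]
        refine Finset.sum_eq_zero fun z _ => ?_
        rw [if_pos hs, if_neg hYmem, if_neg hU, mul_zero, mul_zero, add_zero]
    · -- S i j = w; orientation Y i = y
      have hsub : d - Finsupp.single (N.S i (j:ℕ)) 1 = Finsupp.single y n := by
        rw [hSw, hd, sub_yz_z]
      by_cases hY : N.Y i = y ∧ 1 ≤ n
      · have hYmem : N.Y i ∈ (d - Finsupp.single (N.S i (j:ℕ)) 1).support := by
          rw [hsub, mem_support_y]; exact hY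
        have hsub2 : d - Finsupp.single (N.S i (j:ℕ)) 1 - Finsupp.single (N.Y i) 1
            = Finsupp.single y (n-1) := by rw [hsub, hY.1, sub_y_y]
        rw [Finset.sum_congr rfl fun z _ => by
          rw [if_pos hs, if_pos hYmem, if_neg hU, mul_zero, add_zero, hsub2]]
        have hcond : ((N.Y i = y ∧ N.S i (j:ℕ) = w) ∨ (N.Y i = w ∧ N.S i (j:ℕ) = y)) ∧ 1 ≤ n :=
          ⟨Or.inl ⟨hY.1, hSw⟩, hY.2⟩
        rw [if_pos hcond]
        have : ∀ z : σ, k ⟨i,j,0⟩ *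
              (ind (N.U i ((j:ℕ)+1)) z - ind (N.Y i) z - ind (N.S i (j:ℕ)) z) *
              ((((Finsupp.single y (n-1) : σ →₀ ℕ) z : ℝ) + 1) *
                coeff (Finsupp.single y (n-1) + Finsupp.single z 1) φ)
            = k ⟨i,j,0⟩ *
              (ind (N.U i ((j:ℕ)+1)) z - ind (N.Y i) z - ind (N.S i (j:ℕ)) z) *
              Tf y φ (n-1) z := fun z => by rw [Tf]
        rw [Finset.sum_congr rfl fun z _ => this z, sum_tri, hY.1, hSw,
          Tf_of_ne hUy, Tf_of_ne (Ne.symm hwy), Tf_self φ hY.2]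
        ring
      · have hYmem : N.Y i ∉ (d - Finsupp.single (N.S i (j:ℕ)) 1).support := by
          rw [hsub, mem_support_y]; exact hY
        have hcond : ¬ (((N.Y i = y ∧ N.S i (j:ℕ) = w) ∨ (N.Y i = w ∧ N.S i (j:ℕ) = y)) ∧ 1 ≤ n) := by
          rintro ⟨h | h, hn⟩
          · exact hY ⟨h.1, hn⟩
          · exact hwy (hSw.symm.trans h.2)
        rw [if_neg hcond]
        refine Finset.sum_eq_zero fun z _ => ?_
        rw [if_pos hs, if_neg hYmem, if_neg hU, mul_zero, mul_zero, add_zero]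
  · have hcond : ¬ (((N.Y i = y ∧ N.S i (j:ℕ) = w) ∨ (N.Y i = w ∧ N.S i (j:ℕ) = y)) ∧ 1 ≤ n) := by
      rintro ⟨h | h, hn⟩
      · exact hs ((mem_support_yz n hwy).mpr (Or.inr h.2))
      · exact hs ((mem_support_yz n hwy).mpr (Or.inl ⟨h.2, hn⟩))
    rw [if_neg hcond]
    refine Finset.sum_eq_zero fun z _ => ?_
    rw [if_neg hs, if_neg hU, mul_zero, mul_zero, add_zero]

end Recursions


section Chat

open scoped Classical

variable {N : A1Network σ}

/-- Sign-normalized coefficient of the monomial `y^n·z` in the `s`-th derivative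
of the variable `w₀`. -/
noncomputable def chat (N : A1Network σ) (k : N.Param → ℝ) (y w₀ : σ) (s n : ℕ) (z : σ) : ℝ :=
  ((-1:ℝ)^s * (if N.inter z then -1 else 1)) *
    MvPolynomial.coeff (Finsupp.single y n + Finsupp.single z 1) (N.deriv k s w₀)

lemma deriv_succ (k : N.Param → ℝ) (s : ℕ) (w₀ : σ) :
    N.deriv k (s+1) w₀ = lieD (N.rhs k) (N.deriv k s w₀) := rfl

lemma deriv_zero (k : N.Param → ℝ) (w₀ : σ) : N.deriv k 0 w₀ = X w₀ := rfl

lemma nonint_Y (h1 : N.Assumption1) (i : N.ι) : ¬ N.inter (N.Y i) := by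
  rintro ⟨i', j', h⟩; exact h1.U_ne_Y i' j' i h.symm

lemma nonint_S (h1 : N.Assumption1) (i : N.ι) (j : ℕ) (hj : j ≤ N.L i) :
    ¬ N.inter (N.S i j) := by
  rintro ⟨i', j', h⟩; exact h1.U_ne_S i' j' i j hj h.symm

lemma coeff_eq_sign_chat (k : N.Param → ℝ) (y w₀ : σ) (s n : ℕ) (z : σ) :
    MvPolynomial.coeff (Finsupp.single y n + Finsupp.single z 1) (N.deriv k s w₀)
      = ((-1:ℝ)^s * (if N.inter z then -1 else 1)) * chat N k y w₀ s n z := by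
  rw [chat, ← mul_assoc]
  have h : ((-1:ℝ)^s * (if N.inter z then -1 else 1)) *
      ((-1:ℝ)^s * (if N.inter z then -1 else 1)) = 1 := by
    have h1 : ((-1:ℝ)^s) * ((-1:ℝ)^s) = 1 := by
      rw [← mul_pow]; norm_num
    split_ifs <;> nlinarith [h1]
  rw [h, one_mul]

lemma chat_ne_iff (k : N.Param → ℝ) (y w₀ : σ) (s n : ℕ) (z : σ) :
    chat N k y w₀ s n z ≠ 0 ↔
      MvPolynomial.coeff (Finsupp.single y n + Finsupp.single z 1) (N.deriv k s w₀) ≠ 0 := by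
  rw [coeff_eq_sign_chat k y w₀ s n z, chat]
  have h1 : ((-1:ℝ)^s * (if N.inter z then -1 else 1)) ≠ 0 := by
    have : ((-1:ℝ)^s) ≠ 0 := pow_ne_zero _ (by norm_num)
    split_ifs <;> simp [this]
  constructor
  · exact fun h => mul_ne_zero h1 h
  · intro h hc
    rw [hc, mul_zero] at h
    exact h rfl

/-- Pure powers of `y` never appear in derivatives of `w₀ ≠ y`. -/
lemma coeff_pure_zero (k : N.Param → ℝ) {y w₀ : σ} (h1 : N.Assumption1)
    (hYS : ∀ i (j : ℕ), j ≤ N.L i → N.Y i ≠ N.S i j)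
    (hyn : ¬ N.inter y) (hwy : w₀ ≠ y) :
    ∀ s n, MvPolynomial.coeff (Finsupp.single y n) (N.deriv k s w₀) = 0 := by
  intro s
  induction s with
  | zero =>
    intro n
    rw [deriv_zero, X, coeff_monomial]
    rw [if_neg]
    intro h
    have := DFunLike.congr_fun h w₀
    rw [Finsupp.single_eq_same, Finsupp.single_eq_of_ne' (Ne.symm hwy)] at this
    exact one_ne_zero this
  | succ s ih =>
    intro n
    rw [deriv_succ, coeff_rec_pure k h1 hYS hyn]

lemma chat_at_y (k : N.Param → ℝ) {y w₀ : σ} (h1 : N.Assumption1)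
    (hYS : ∀ i (j : ℕ), j ≤ N.L i → N.Y i ≠ N.S i j)
    (hyn : ¬ N.inter y) (hwy : w₀ ≠ y) (s n : ℕ) :
    chat N k y w₀ s n y = 0 := by
  rw [chat, ← Finsupp.single_add, coeff_pure_zero k h1 hYS hyn hwy, mul_zero]

lemma chat_zero_eq (k : N.Param → ℝ) {y w₀ : σ} (hw₀ : ¬ N.inter w₀) (hwy : w₀ ≠ y)
    (n : ℕ) (z : σ) :
    chat N k y w₀ 0 n z = if n = 0 ∧ z = w₀ then 1 else 0 := by
  have key : Finsupp.single w₀ 1 = Finsupp.single y n + Finsupp.single z 1 ↔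
      n = 0 ∧ z = w₀ := by
    constructor
    · intro h
      have hy' := DFunLike.congr_fun h y
      rw [Finsupp.single_eq_of_ne' hwy, Finsupp.add_apply, Finsupp.single_eq_same] at hy'
      have hn : n = 0 := Nat.eq_zero_of_add_eq_zero_right hy'.symm
      subst hn
      rw [Finsupp.single_zero, zero_add] at h
      have hz := DFunLike.congr_fun h z
      rw [Finsupp.single_eq_same] at hz
      have hwz : w₀ = z := by
        by_contra hne
        rw [Finsupp.single_eq_of_ne' hne] at hz
        exact one_ne_zero hz.symm
      exact ⟨rfl, hwz.symm⟩
    · rintro ⟨rfl, rfl⟩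
      rw [Finsupp.single_zero, zero_add]
  rw [chat, deriv_zero, X, coeff_monomial, if_congr key rfl rfl]
  split_ifs with hint h h
  · exact absurd (h.2 ▸ hint) hw₀
  · norm_num
  · norm_num
  · norm_num

/-- The recursion for `chat` at an intermediate species: all coefficients nonnegative. -/
lemma chat_rec_int (k : N.Param → ℝ) {y w₀ : σ} (h1 : N.Assumption1)
    (hYS : ∀ i (j : ℕ), j ≤ N.L i → N.Y i ≠ N.S i j)
    (hyn : ¬ N.inter y) (s n : ℕ) (i₀ : N.ι) (j₀ : Fin (N.L i₀)) :
    chat N k y w₀ (s+1) n (N.U i₀ ((j₀:ℕ)+1))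
      = k ⟨i₀,j₀,1⟩ *
          ((((Finsupp.single y n : σ →₀ ℕ) (N.Y i₀) : ℝ) + 1) * chat N k y w₀ s n (N.Y i₀)
           + (((Finsupp.single y n : σ →₀ ℕ) (N.S i₀ (j₀:ℕ)) : ℝ) + 1) *
              chat N k y w₀ s n (N.S i₀ (j₀:ℕ))
           + chat N k y w₀ s n (N.U i₀ ((j₀:ℕ)+1)))
      + k ⟨i₀,j₀,2⟩ *
          ((((Finsupp.single y n : σ →₀ ℕ) (N.Y i₀) : ℝ) + 1) * chat N k y w₀ s n (N.Y i₀)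
           + (((Finsupp.single y n : σ →₀ ℕ) (N.S i₀ ((j₀:ℕ)+1)) : ℝ) + 1) *
              chat N k y w₀ s n (N.S i₀ ((j₀:ℕ)+1))
           + chat N k y w₀ s n (N.U i₀ ((j₀:ℕ)+1))) := by
  have hintU : N.inter (N.U i₀ ((j₀:ℕ)+1)) := ⟨i₀, j₀, rfl⟩
  have hYn := nonint_Y (N := N) h1 i₀
  have hSn1 := nonint_S (N := N) h1 i₀ (j₀:ℕ) j₀.isLt.le
  have hSn2 := nonint_S (N := N) h1 i₀ ((j₀:ℕ)+1) j₀.isLt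
  have hUy : y ≠ N.U i₀ ((j₀:ℕ)+1) := (U_ne' h1 hyn i₀ j₀).symm
  rw [chat, deriv_succ, coeff_rec_int k h1 hYS hyn, Tf, Tf, Tf, Tf,
    Finsupp.single_eq_of_ne' hUy]
  unfold chat
  rw [if_pos hintU, if_neg hYn, if_neg hSn1, if_neg hSn2, pow_succ]
  push_cast
  ring

/-- The recursion for `chat` at a non-intermediate species `w ≠ y`. -/
lemma chat_rec_nonint (k : N.Param → ℝ) {y w₀ w : σ} (h1 : N.Assumption1)
    (hYS : ∀ i (j : ℕ), j ≤ N.L i → N.Y i ≠ N.S i j)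
    (hyn : ¬ N.inter y) (hwn : ¬ N.inter w) (hwy : w ≠ y) (hw₀y : w₀ ≠ y) (s n : ℕ) :
    chat N k y w₀ (s+1) n w
      = ∑ i : N.ι, ∑ j : Fin (N.L i),
          (if ((N.Y i = y ∧ N.S i (j:ℕ) = w) ∨ (N.Y i = w ∧ N.S i (j:ℕ) = y)) ∧ 1 ≤ n then
            k ⟨i,j,0⟩ * (chat N k y w₀ s (n-1) (N.U i ((j:ℕ)+1))
              + chat N k y w₀ s (n-1) w)
          else 0) := by
  rw [chat, deriv_succ, coeff_rec_nonint k h1 hYS hyn hwn hwy, Finset.mul_sum]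
  refine Finset.sum_congr rfl fun i _ => ?_
  rw [Finset.mul_sum]
  refine Finset.sum_congr rfl fun j _ => ?_
  rw [mul_ite, mul_zero]
  split_ifs with hc
  · have hintU : N.inter (N.U i ((j:ℕ)+1)) := ⟨i, j, rfl⟩
    rw [coeff_pure_zero k h1 hYS hyn hw₀y]
    unfold chat
    rw [if_pos hintU, if_neg hwn, pow_succ]
    ring
  · rfl

lemma chat_nonneg (k : N.Param → ℝ) {y w₀ : σ} (h1 : N.Assumption1)
    (hYS : ∀ i (j : ℕ), j ≤ N.L i → N.Y i ≠ N.S i j)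
    (hyn : ¬ N.inter y) (hk : ∀ r, 0 < k r) (hw₀ : ¬ N.inter w₀) (hw₀y : w₀ ≠ y) :
    ∀ s n z, 0 ≤ chat N k y w₀ s n z := by
  intro s
  induction s with
  | zero =>
    intro n z
    rw [chat_zero_eq k hw₀ hw₀y]
    split_ifs <;> norm_num
  | succ s ih =>
    intro n z
    by_cases hz : N.inter z
    · obtain ⟨i₀, j₀, rfl⟩ := hz
      rw [chat_rec_int k h1 hYS hyn]
      have hm : ∀ a : σ, (0:ℝ) ≤ ((Finsupp.single y n : σ →₀ ℕ) a : ℝ) + 1 := by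
        intro a; positivity
      refine add_nonneg (mul_nonneg (hk _).le ?_) (mul_nonneg (hk _).le ?_) <;>
        exact add_nonneg (add_nonneg (mul_nonneg (hm _) (ih _ _)) (mul_nonneg (hm _) (ih _ _)))
          (ih _ _)
    · by_cases hzy : z = y
      · subst hzy
        rw [chat_at_y k h1 hYS hyn hw₀y]
      · rw [chat_rec_nonint k h1 hYS hyn hz hzy hw₀y]
        refine Finset.sum_nonneg fun i _ => Finset.sum_nonneg fun j _ => ?_
        split_ifs with hc
        · exact mul_nonneg (hk _).le (add_nonneg (ih _ _) (ih _ _))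
        · rfl

end Chat

section Steps

variable {N : A1Network σ} (k : N.Param → ℝ) {y w₀ : σ}

lemma chat_step_int (h1 : N.Assumption1)
    (hYS : ∀ i (j : ℕ), j ≤ N.L i → N.Y i ≠ N.S i j)
    (hyn : ¬ N.inter y) (hk : ∀ r, 0 < k r) (hw₀ : ¬ N.inter w₀) (hw₀y : w₀ ≠ y)
    (s n : ℕ) (i₀ : N.ι) (j₀ : Fin (N.L i₀)) {z' : σ}
    (hz' : z' = N.Y i₀ ∨ z' = N.S i₀ (j₀:ℕ) ∨ z' = N.S i₀ ((j₀:ℕ)+1))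
    (hpos : 0 < chat N k y w₀ s n z') :
    0 < chat N k y w₀ (s+1) n (N.U i₀ ((j₀:ℕ)+1)) := by
  rw [chat_rec_int k h1 hYS hyn]
  have hnn := chat_nonneg k h1 hYS hyn hk hw₀ hw₀y
  have hm : ∀ a : σ, (0:ℝ) < ((Finsupp.single y n : σ →₀ ℕ) a : ℝ) + 1 := fun a => by positivity
  rcases hz' with rfl | rfl | rfl
  · refine add_pos_of_pos_of_nonneg (mul_pos (hk _) ?_) (mul_nonneg (hk _).le ?_)
    · exact add_pos_of_pos_of_nonneg
        (add_pos_of_pos_of_nonneg (mul_pos (hm _) hpos) (mul_nonneg (hm _).le (hnn _ _ _)))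
        (hnn _ _ _)
    · exact add_nonneg (add_nonneg (mul_nonneg (hm _).le (hnn _ _ _))
        (mul_nonneg (hm _).le (hnn _ _ _))) (hnn _ _ _)
  · refine add_pos_of_pos_of_nonneg (mul_pos (hk _) ?_) (mul_nonneg (hk _).le ?_)
    · exact add_pos_of_pos_of_nonneg
        (add_pos_of_nonneg_of_pos (mul_nonneg (hm _).le (hnn _ _ _)) (mul_pos (hm _) hpos))
        (hnn _ _ _)
    · exact add_nonneg (add_nonneg (mul_nonneg (hm _).le (hnn _ _ _))
        (mul_nonneg (hm _).le (hnn _ _ _))) (hnn _ _ _)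
  · refine add_pos_of_nonneg_of_pos (mul_nonneg (hk _).le ?_) (mul_pos (hk _) ?_)
    · exact add_nonneg (add_nonneg (mul_nonneg (hm _).le (hnn _ _ _))
        (mul_nonneg (hm _).le (hnn _ _ _))) (hnn _ _ _)
    · exact add_pos_of_pos_of_nonneg
        (add_pos_of_nonneg_of_pos (mul_nonneg (hm _).le (hnn _ _ _)) (mul_pos (hm _) hpos))
        (hnn _ _ _)

lemma chat_step_nonint (h1 : N.Assumption1)
    (hYS : ∀ i (j : ℕ), j ≤ N.L i → N.Y i ≠ N.S i j)
    (hyn : ¬ N.inter y) (hk : ∀ r, 0 < k r) (hw₀ : ¬ N.inter w₀) (hw₀y : w₀ ≠ y)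
    (s n : ℕ) (i : N.ι) (j : Fin (N.L i)) {w : σ}
    (hwn : ¬ N.inter w) (hwy : w ≠ y) (hn : 1 ≤ n)
    (hblock : (N.Y i = y ∧ N.S i (j:ℕ) = w) ∨ (N.Y i = w ∧ N.S i (j:ℕ) = y))
    (hpos : 0 < chat N k y w₀ s (n-1) (N.U i ((j:ℕ)+1)) ∨ 0 < chat N k y w₀ s (n-1) w) :
    0 < chat N k y w₀ (s+1) n w := by
  rw [chat_rec_nonint k h1 hYS hyn hwn hwy hw₀y]
  have hnn := chat_nonneg k h1 hYS hyn hk hw₀ hw₀y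
  have hterm : ∀ i' (j' : Fin (N.L i')), (0:ℝ) ≤
      (if ((N.Y i' = y ∧ N.S i' (j':ℕ) = w) ∨ (N.Y i' = w ∧ N.S i' (j':ℕ) = y)) ∧ 1 ≤ n then
        k ⟨i',j',0⟩ * (chat N k y w₀ s (n-1) (N.U i' ((j':ℕ)+1)) + chat N k y w₀ s (n-1) w)
      else 0) := by
    intro i' j'
    split_ifs with hc
    · exact mul_nonneg (hk _).le (add_nonneg (hnn _ _ _) (hnn _ _ _))
    · exact le_refl 0
  refine Finset.sum_pos' (fun i' _ => Finset.sum_nonneg fun j' _ => hterm i' j')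
    ⟨i, Finset.mem_univ i, ?_⟩
  refine Finset.sum_pos' (fun j' _ => hterm i j') ⟨j, Finset.mem_univ j, ?_⟩
  rw [if_pos ⟨hblock, hn⟩]
  rcases hpos with h | h
  · exact mul_pos (hk _) (add_pos_of_pos_of_nonneg h (hnn _ _ _))
  · exact mul_pos (hk _) (add_pos_of_nonneg_of_pos (hnn _ _ _) h)

lemma chat_pos_zero (hw₀ : ¬ N.inter w₀) (hw₀y : w₀ ≠ y) {n : ℕ} {z : σ}
    (h : 0 < chat N k y w₀ 0 n z) : n = 0 ∧ z = w₀ := by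
  rw [chat_zero_eq k hw₀ hw₀y] at h
  split_ifs at h with hc
  · exact hc
  · exact absurd h (lt_irrefl 0)

lemma chat_extract_nonint (h1 : N.Assumption1)
    (hYS : ∀ i (j : ℕ), j ≤ N.L i → N.Y i ≠ N.S i j)
    (hyn : ¬ N.inter y) (hk : ∀ r, 0 < k r) (hw₀ : ¬ N.inter w₀) (hw₀y : w₀ ≠ y)
    {s n : ℕ} {w : σ} (hwn : ¬ N.inter w) (hwy : w ≠ y)
    (hpos : 0 < chat N k y w₀ (s+1) n w) :
    1 ≤ n ∧ ∃ i, ∃ j : Fin (N.L i),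
      ((N.Y i = y ∧ N.S i (j:ℕ) = w) ∨ (N.Y i = w ∧ N.S i (j:ℕ) = y)) ∧
      (0 < chat N k y w₀ s (n-1) (N.U i ((j:ℕ)+1)) ∨ 0 < chat N k y w₀ s (n-1) w) := by
  have hnn := chat_nonneg k h1 hYS hyn hk hw₀ hw₀y
  rw [chat_rec_nonint k h1 hYS hyn hwn hwy hw₀y] at hpos
  obtain ⟨i, -, hi⟩ := Finset.exists_ne_zero_of_sum_ne_zero hpos.ne'
  obtain ⟨j, -, hj⟩ := Finset.exists_ne_zero_of_sum_ne_zero hi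
  rw [ne_eq, ite_eq_right_iff, not_forall] at hj
  obtain ⟨⟨hblock, hn⟩, hne⟩ := hj
  refine ⟨hn, i, j, hblock, ?_⟩
  have hsum : 0 < chat N k y w₀ s (n-1) (N.U i ((j:ℕ)+1)) + chat N k y w₀ s (n-1) w := by
    rcases lt_or_eq_of_le (add_nonneg (hnn s (n-1) (N.U i ((j:ℕ)+1))) (hnn s (n-1) w)) with h | h
    · exact h
    · exact absurd (by rw [← h, mul_zero]) hne
  by_cases hU : 0 < chat N k y w₀ s (n-1) (N.U i ((j:ℕ)+1))
  · exact Or.inl hU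
  · refine Or.inr ?_
    have h0 : chat N k y w₀ s (n-1) (N.U i ((j:ℕ)+1)) = 0 :=
      le_antisymm (not_lt.mp hU) (hnn _ _ _)
    rw [h0, zero_add] at hsum
    exact hsum

lemma chat_peel_int (h1 : N.Assumption1)
    (hYS : ∀ i (j : ℕ), j ≤ N.L i → N.Y i ≠ N.S i j)
    (hyn : ¬ N.inter y) (hk : ∀ r, 0 < k r) (hw₀ : ¬ N.inter w₀) (hw₀y : w₀ ≠ y)
    (i₀ : N.ι) (j₀ : Fin (N.L i₀)) :
    ∀ s n, 0 < chat N k y w₀ s n (N.U i₀ ((j₀:ℕ)+1)) →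
      ∃ s₂ < s, ∃ z', (z' = N.Y i₀ ∨ z' = N.S i₀ (j₀:ℕ) ∨ z' = N.S i₀ ((j₀:ℕ)+1)) ∧ z' ≠ y ∧
        0 < chat N k y w₀ s₂ n z' := by
  have hnn := chat_nonneg k h1 hYS hyn hk hw₀ hw₀y
  intro s
  induction s with
  | zero =>
    intro n h
    obtain ⟨-, hzw⟩ := chat_pos_zero k hw₀ hw₀y h
    exact absurd (hzw ▸ (⟨i₀, j₀, rfl⟩ : N.inter (N.U i₀ ((j₀:ℕ)+1)))) hw₀
  | succ s ih =>
    intro n h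
    have hney : ∀ z', 0 < chat N k y w₀ s n z' → z' ≠ y := by
      intro z' hz' he
      rw [he, chat_at_y k h1 hYS hyn hw₀y] at hz'
      exact absurd hz' (lt_irrefl 0)
    by_cases hY : 0 < chat N k y w₀ s n (N.Y i₀)
    · exact ⟨s, Nat.lt_succ_self s, N.Y i₀, Or.inl rfl, hney _ hY, hY⟩
    by_cases hS1 : 0 < chat N k y w₀ s n (N.S i₀ (j₀:ℕ))
    · exact ⟨s, Nat.lt_succ_self s, N.S i₀ (j₀:ℕ), Or.inr (Or.inl rfl), hney _ hS1, hS1⟩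
    by_cases hS2 : 0 < chat N k y w₀ s n (N.S i₀ ((j₀:ℕ)+1))
    · exact ⟨s, Nat.lt_succ_self s, N.S i₀ ((j₀:ℕ)+1), Or.inr (Or.inr rfl), hney _ hS2, hS2⟩
    have hY0 : chat N k y w₀ s n (N.Y i₀) = 0 := le_antisymm (not_lt.mp hY) (hnn _ _ _)
    have hS10 : chat N k y w₀ s n (N.S i₀ (j₀:ℕ)) = 0 := le_antisymm (not_lt.mp hS1) (hnn _ _ _)
    have hS20 : chat N k y w₀ s n (N.S i₀ ((j₀:ℕ)+1)) = 0 := le_antisymm (not_lt.mp hS2) (hnn _ _ _)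
    rw [chat_rec_int k h1 hYS hyn, hY0, hS10, hS20, mul_zero, mul_zero, mul_zero] at h
    have hU : 0 < chat N k y w₀ s n (N.U i₀ ((j₀:ℕ)+1)) := by
      rcases lt_or_eq_of_le (hnn s n (N.U i₀ ((j₀:ℕ)+1))) with h' | h'
      · exact h'
      · rw [← h'] at h; simp at h
    obtain ⟨s₂, hs₂, z', hz', hzy, hp⟩ := ih n hU
    exact ⟨s₂, hs₂.trans (Nat.lt_succ_self s), z', hz', hzy, hp⟩

end Steps

section Main

variable {N : A1Network σ} (k : N.Param → ℝ) {part : σ → ℕ} {x y : σ} {iy : N.ι}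

lemma comp_unique (h1 : N.Assumption1) {i i' : N.ι} {jj jj' : ℕ}
    (hj : jj ≤ N.L i) (hj' : jj' ≤ N.L i')
    (hY : N.Y i = N.Y i') (hS : N.S i jj = N.S i' jj') : i = i' :=
  h1.complex_unique i i' jj jj' hj hj' (fun x0 => by rw [hY, hS])

lemma chat_self_chain (h1 : N.Assumption1)
    (hYS : ∀ i (j : ℕ), j ≤ N.L i → N.Y i ≠ N.S i j)
    (hyn : ¬ N.inter y) (hk : ∀ r, 0 < k r) {zw : σ}
    (hzwn : ¬ N.inter zw) (hzwy : zw ≠ y)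
    (i : N.ι) (j : Fin (N.L i))
    (hblock : (N.Y i = y ∧ N.S i (j:ℕ) = zw) ∨ (N.Y i = zw ∧ N.S i (j:ℕ) = y)) :
    ∀ m, 0 < chat N k y zw m m zw := by
  intro m
  induction m with
  | zero =>
    rw [chat_zero_eq k hzwn hzwy, if_pos ⟨rfl, rfl⟩]
    norm_num
  | succ m ihm =>
    refine chat_step_nonint k h1 hYS hyn hk hzwn hzwy m (m+1) i j hzwn hzwy
      (Nat.le_add_left 1 m) hblock (Or.inr ?_)
    rw [Nat.add_sub_cancel]
    exact ihm

/-- The main structural induction: every monomial `y^n·z` appearing in `x^{(s)}`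
carries the full structural package. -/
lemma main_ind (h1 : N.Assumption1)
    (hYS : ∀ i (j : ℕ), j ≤ N.L i → N.Y i ≠ N.S i j)
    (hyn : ¬ N.inter y) (hk : ∀ r, 0 < k r)
    (hx : ¬ N.inter x) (hxy : x ≠ y)
    (hpS : ∀ i (jj jj' : ℕ), jj ≤ N.L i → jj' ≤ N.L i → part (N.S i jj) = part (N.S i jj'))
    (hpYS : ∀ i (jj : ℕ), jj ≤ N.L i → part (N.Y i) ≠ part (N.S i jj))
    (hyx : part y ≠ part x) (hy : y = N.Y iy) :
    ∀ s n (z : σ), ¬ N.inter z → z ≠ y → 0 < chat N k y x s n z →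
      (n ≤ s ∧ part z = part x ∧
       ((∃ jj, jj ≤ N.L iy ∧ z = N.S iy jj) → (∃ jj, jj ≤ N.L iy ∧ x = N.S iy jj)) ∧
       (z = x ∨ ∃ i, ∃ j : Fin (N.L i), N.Y i = y ∧ N.S i ((j:ℕ)+1) = x ∧ 1 ≤ n ∧
          ∃ s', s' + 2 ≤ s ∧ 0 < chat N k y (N.S i (j:ℕ)) s' (n-1) z)) := by
  intro s
  induction s using Nat.strong_induction_on with
  | _ s ih =>
  rcases s with _ | s
  · intro n z hzn hzy hpos
    obtain ⟨rfl, rfl⟩ := chat_pos_zero k hx hxy hpos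
    exact ⟨le_refl 0, rfl, fun h => h, Or.inl rfl⟩
  · intro n z hzn hzy hpos
    obtain ⟨hn, i, j, hblock, hpred⟩ :=
      chat_extract_nonint k h1 hYS hyn hk hx hxy hzn hzy hpos
    rcases hpred with hU | hz
    swap
    · -- predecessor is the same species `z` one level down
      obtain ⟨Q0, Q1, Q2, Q3⟩ := ih s (Nat.lt_succ_self s) (n-1) z hzn hzy hz
      refine ⟨by omega, Q1, Q2, ?_⟩
      rcases Q3 with rfl | ⟨i', j', hYi', hSx', hn1, s', hs', hchat'⟩
      · exact Or.inl rfl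
      · refine Or.inr ⟨i', j', hYi', hSx', hn, s'+1, by omega, ?_⟩
        have hzw'n : ¬ N.inter (N.S i' (j':ℕ)) := nonint_S h1 i' (j':ℕ) j'.isLt.le
        have hzw'y : N.S i' (j':ℕ) ≠ y := by
          intro he
          exact hpYS i' (j':ℕ) j'.isLt.le (by rw [hYi', he])
        refine chat_step_nonint k h1 hYS hyn hk hzw'n hzw'y s' (n-1) i j hzn hzy hn1
          hblock (Or.inr hchat')
    · -- predecessor is the intermediate of the block
      obtain ⟨s₂, hs₂, z', hz'mem, hz'y, hz'pos⟩ :=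
        chat_peel_int k h1 hYS hyn hk hx hxy i j s (n-1) hU
      have hz'n : ¬ N.inter z' := by
        rcases hz'mem with rfl | rfl | rfl
        · exact nonint_Y h1 i
        · exact nonint_S h1 i (j:ℕ) j.isLt.le
        · exact nonint_S h1 i ((j:ℕ)+1) j.isLt
      obtain ⟨Q0, Q1, Q2, Q3⟩ :=
        ih s₂ (by omega) (n-1) z' hz'n hz'y hz'pos
      rcases hblock with ⟨hbY, hbS⟩ | ⟨hbY, hbS⟩
      · -- orientation I : Y i = y, S i j = z
        have hz'cases : z' = z ∨ z' = N.S i ((j:ℕ)+1) := by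
          rcases hz'mem with rfl | rfl | rfl
          · exact absurd hbY hz'y
          · exact Or.inl hbS
          · exact Or.inr rfl
        have hP1 : part z = part x := by
          rcases hz'cases with rfl | rfl
          · exact Q1
          · rw [← hbS, hpS i (j:ℕ) ((j:ℕ)+1) j.isLt.le j.isLt]
            exact Q1
        have hP2 : (∃ jj, jj ≤ N.L iy ∧ z = N.S iy jj) → (∃ jj, jj ≤ N.L iy ∧ x = N.S iy jj) := by
          rintro ⟨jj, hjj, hzjj⟩
          have hiiy : i = iy :=
            comp_unique h1 j.isLt.le hjj (by rw [hbY, hy]) (by rw [hbS, hzjj])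
          rcases hz'cases with rfl | rfl
          · exact Q2 ⟨jj, hjj, hzjj⟩
          · subst hiiy
            exact Q2 ⟨(j:ℕ)+1, j.isLt, rfl⟩
        refine ⟨by omega, hP1, hP2, ?_⟩
        by_cases hzx : z = x
        · exact Or.inl hzx
        refine Or.inr ?_
        rcases hz'cases with rfl | rfl
        · -- z' = z : lift the claim one step along the block
          rcases Q3 with rfl | ⟨i', j', hYi', hSx', hn1, s', hs', hchat'⟩
          · exact absurd rfl hzx
          refine ⟨i', j', hYi', hSx', hn, s'+1, by omega, ?_⟩
          have hzw'n : ¬ N.inter (N.S i' (j':ℕ)) := nonint_S h1 i' (j':ℕ) j'.isLt.le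
          have hzw'y : N.S i' (j':ℕ) ≠ y := by
            intro he
            exact hpYS i' (j':ℕ) j'.isLt.le (by rw [hYi', he])
          exact chat_step_nonint k h1 hYS hyn hk hzw'n hzw'y s' (n-1) i j hzn hzy hn1
            (Or.inl ⟨hbY, hbS⟩) (Or.inr hchat')
        · -- z' = S i (j+1)
          have hzwn : ¬ N.inter z := hzn
          have hzwselfn : ¬ N.inter (N.S i (j:ℕ)) := nonint_S h1 i (j:ℕ) j.isLt.le
          have hzwselfy : N.S i (j:ℕ) ≠ y := by
            intro he
            exact hpYS i (j:ℕ) j.isLt.le (by rw [hbY, he])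
          by_cases hz'x : N.S i ((j:ℕ)+1) = x
          · -- the first species change: this block is the witness
            refine ⟨i, j, hbY, hz'x, hn, n-1, by omega, ?_⟩
            rw [← hbS]
            exact chat_self_chain k h1 hYS hyn hk hzwselfn hzwselfy i j
              (Or.inl ⟨hbY, rfl⟩) (n-1)
          · -- lift the claim two steps : z' → U → z
            rcases Q3 with heq | ⟨i', j', hYi', hSx', hn1, s', hs', hchat'⟩
            · exact absurd heq hz'x
            refine ⟨i', j', hYi', hSx', hn, s'+2, by omega, ?_⟩
            have hzw'n : ¬ N.inter (N.S i' (j':ℕ)) := nonint_S h1 i' (j':ℕ) j'.isLt.le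
            have hzw'y : N.S i' (j':ℕ) ≠ y := by
              intro he
              exact hpYS i' (j':ℕ) j'.isLt.le (by rw [hYi', he])
            have step1 : 0 < chat N k y (N.S i' (j':ℕ)) (s'+1) (n-1-1) (N.U i ((j:ℕ)+1)) :=
              chat_step_int k h1 hYS hyn hk hzw'n hzw'y s' (n-1-1) i j
                (Or.inr (Or.inr rfl)) hchat'
            exact chat_step_nonint k h1 hYS hyn hk hzw'n hzw'y (s'+1) (n-1) i j hzn hzy hn1
              (Or.inl ⟨hbY, hbS⟩) (Or.inl step1)
      · -- orientation II : Y i = z, S i j = y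
        have hz'z : z' = z := by
          rcases hz'mem with rfl | rfl | rfl
          · exact hbY
          · exact absurd hbS hz'y
          · exfalso
            apply hyx
            rw [← Q1, ← hbS, hpS i (j:ℕ) ((j:ℕ)+1) j.isLt.le j.isLt]
        subst hz'z
        refine ⟨by omega, Q1, Q2, ?_⟩
        rcases Q3 with rfl | ⟨i', j', hYi', hSx', hn1, s', hs', hchat'⟩
        · exact Or.inl rfl
        refine Or.inr ⟨i', j', hYi', hSx', hn, s'+1, by omega, ?_⟩
        have hzw'n : ¬ N.inter (N.S i' (j':ℕ)) := nonint_S h1 i' (j':ℕ) j'.isLt.le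
        have hzw'y : N.S i' (j':ℕ) ≠ y := by
          intro he
          exact hpYS i' (j':ℕ) j'.isLt.le (by rw [hYi', he])
        exact chat_step_nonint k h1 hYS hyn hk hzw'n hzw'y s' (n-1) i j hzn hzy hn1
          (Or.inr ⟨hbY, hbS⟩) (Or.inr hchat')

end Main

/-- **Lemma.** For a network satisfying Assumptions 1 and 2 (with an explicit partition
`part`), let `v` be the intermediate of block `jv+1` of a component `iv` (whose enzyme is
`Ỹ = Y iv`), and let `y = Y iy` be a non-intermediate acting as an enzyme in a connected
component `iy` whose set of substrates and products equals `𝒮_V`, the set of substrates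
and products of the component of `v`. Let `x` be a non-intermediate lying in a class
`α ≥ 1` of the partition not containing `y` nor `Ỹ`. If a monomial `y^r · v` appears in
`x^{(ℓ)}`, `ℓ ≥ 1`, then `x ∈ 𝒮_V`; moreover either `v` reacts to `x`, or `r ≥ 1`,
`ℓ ≥ 2`, and a monomial `y^t · v` with `t < r` appears in `z_w^{(i)}` for some
`i ≤ ℓ - 2`, where `z_w` comes from a block `Y + Z_w ⇄ W → Y + X` of the network; and if
`r ≥ 1` and `ℓ` is minimal, then `t = r - 1`. -/
theorem monomial_y_pow_v_structure
    (N : A1Network σ) (h1 : N.Assumption1)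
    (part : σ → ℕ) (hpart : N.IsPartition part)
    (k : N.Param → ℝ) (hk : ∀ r, 0 < k r)
    (v x y : σ) (iv : N.ι) (jv : Fin (N.L iv)) (hv : v = N.U iv ((jv : ℕ) + 1))
    (iy : N.ι) (hy : y = N.Y iy)
    (hSV : {z : σ | ∃ j ≤ N.L iy, z = N.S iy j} = {z : σ | ∃ j ≤ N.L iv, z = N.S iv j})
    (hx : ¬ N.inter x)
    (hxα : 1 ≤ part x) (hyα : part y ≠ part x) (hYtildeα : part (N.Y iv) ≠ part x)
    (r ℓ : ℕ) (hℓ : 1 ≤ ℓ)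
    (happ : MvPolynomial.coeff (Finsupp.single y r + Finsupp.single v 1)
      (N.deriv k ℓ x) ≠ 0) :
    (∃ j ≤ N.L iv, x = N.S iv j)
    ∧ (N.reactsTo v x ∨
        (1 ≤ r ∧ 2 ≤ ℓ ∧ ∃ i, ∃ j : Fin (N.L i), ∃ zw : σ,
          y = N.Y i ∧ zw = N.S i (j : ℕ) ∧ x = N.S i ((j : ℕ) + 1) ∧
          ∃ t, t < r ∧ ∃ ii, ii ≤ ℓ - 2 ∧
            MvPolynomial.coeff (Finsupp.single y t + Finsupp.single v 1)
              (N.deriv k ii zw) ≠ 0))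
    ∧ (¬ N.reactsTo v x → 1 ≤ r →
        (∀ ℓ' < ℓ,
          MvPolynomial.coeff (Finsupp.single y r + Finsupp.single v 1)
            (N.deriv k ℓ' x) = 0) →
        ∃ i, ∃ j : Fin (N.L i), ∃ zw : σ,
          y = N.Y i ∧ zw = N.S i (j : ℕ) ∧ x = N.S i ((j : ℕ) + 1) ∧
          ∃ ii, ii ≤ ℓ - 2 ∧
            MvPolynomial.coeff (Finsupp.single y (r - 1) + Finsupp.single v 1)
              (N.deriv k ii zw) ≠ 0) := by
  classical
  obtain ⟨hp0, hp2⟩ := hpart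
  choose α hα1 hSα hYα hY0 using hp2
  have hYS : ∀ i (j : ℕ), j ≤ N.L i → N.Y i ≠ N.S i j := by
    intro i j hj he
    exact hYα i (by rw [he, hSα i j hj])
  have hyn : ¬ N.inter y := hy ▸ nonint_Y h1 iy
  have hxy : x ≠ y := fun h => hyα (by rw [h])
  have hpS : ∀ i (jj jj' : ℕ), jj ≤ N.L i → jj' ≤ N.L i →
      part (N.S i jj) = part (N.S i jj') := by
    intro i jj jj' h h'
    rw [hSα i jj h, hSα i jj' h']
  have hpYS : ∀ i (jj : ℕ), jj ≤ N.L i → part (N.Y i) ≠ part (N.S i jj) := by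
    intro i jj hj he
    exact hYα i (by rw [he, hSα i jj hj])
  subst hv
  have hnn := chat_nonneg k h1 hYS hyn hk hx hxy
  have hne : chat N k y x ℓ r (N.U iv ((jv:ℕ)+1)) ≠ 0 :=
    (chat_ne_iff k y x ℓ r _).mpr happ
  have hpos := lt_of_le_of_ne (hnn ℓ r _) (Ne.symm hne)
  obtain ⟨s₁, hs₁, z1, hz1mem, hz1y, hz1pos⟩ :=
    chat_peel_int k h1 hYS hyn hk hx hxy iv jv ℓ r hpos
  have hz1n : ¬ N.inter z1 := by
    rcases hz1mem with rfl | rfl | rfl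
    exacts [nonint_Y h1 iv, nonint_S h1 iv _ jv.isLt.le, nonint_S h1 iv _ jv.isLt]
  obtain ⟨P0, P1, P2, P3⟩ :=
    main_ind k h1 hYS hyn hk hx hxy hpS hpYS hyα hy s₁ r z1 hz1n hz1y hz1pos
  have hz1S : z1 = N.S iv (jv:ℕ) ∨ z1 = N.S iv ((jv:ℕ)+1) := by
    rcases hz1mem with rfl | rfl | rfl
    · exact absurd P1 hYtildeα
    · exact Or.inl rfl
    · exact Or.inr rfl
  have hSV' : ∀ w : σ, (∃ j0, j0 ≤ N.L iy ∧ w = N.S iy j0) ↔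
      (∃ j0, j0 ≤ N.L iv ∧ w = N.S iv j0) := by
    intro w
    have := Set.ext_iff.mp hSV w
    simpa using this
  have hGoal1 : ∃ j0, j0 ≤ N.L iv ∧ x = N.S iv j0 := by
    by_cases hz1x : z1 = x
    · rcases hz1S with h | h
      · exact ⟨(jv:ℕ), jv.isLt.le, by rw [← hz1x, h]⟩
      · exact ⟨(jv:ℕ)+1, jv.isLt, by rw [← hz1x, h]⟩
    · have hz1iv : ∃ j0, j0 ≤ N.L iv ∧ z1 = N.S iv j0 := by
        rcases hz1S with h | h
        · exact ⟨(jv:ℕ), jv.isLt.le, h⟩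
        · exact ⟨(jv:ℕ)+1, jv.isLt, h⟩
      exact (hSV' x).mp (P2 ((hSV' z1).mpr hz1iv))
  have hcons : ¬ N.reactsTo (N.U iv ((jv:ℕ)+1)) x →
      (1 ≤ r ∧ 2 ≤ ℓ ∧ ∃ i', ∃ j' : Fin (N.L i'), y = N.Y i' ∧ x = N.S i' ((j':ℕ)+1) ∧
        ∃ ii, ii ≤ ℓ - 2 ∧
          MvPolynomial.coeff (Finsupp.single y (r-1) + Finsupp.single (N.U iv ((jv:ℕ)+1)) 1)
            (N.deriv k ii (N.S i' (j':ℕ))) ≠ 0) := by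
    intro hreact
    have hz1x : z1 ≠ x := by
      intro he
      apply hreact
      rcases hz1S with h | h
      · exact ⟨iv, jv, rfl, Or.inr (Or.inl (by rw [← he, h]))⟩
      · exact ⟨iv, jv, rfl, Or.inr (Or.inr (by rw [← he, h]))⟩
    rcases P3 with he | ⟨i', j', hYi', hSx', hr1, s', hs', hchat'⟩
    · exact absurd he hz1x
    have hzw'n : ¬ N.inter (N.S i' (j':ℕ)) := nonint_S h1 i' _ j'.isLt.le
    have hzw'y : N.S i' (j':ℕ) ≠ y := fun he =>
      hpYS i' (j':ℕ) j'.isLt.le (by rw [hYi', he])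
    have hlift : 0 < chat N k y (N.S i' (j':ℕ)) (s'+1) (r-1) (N.U iv ((jv:ℕ)+1)) :=
      chat_step_int k h1 hYS hyn hk hzw'n hzw'y s' (r-1) iv jv hz1mem hchat'
    refine ⟨hr1, by omega, i', j', hYi'.symm, hSx'.symm, s'+1, by omega, ?_⟩
    exact (chat_ne_iff k y (N.S i' (j':ℕ)) (s'+1) (r-1) _).mp (ne_of_gt hlift)
  refine ⟨hGoal1, ?_, ?_⟩
  · by_cases hreact : N.reactsTo (N.U iv ((jv:ℕ)+1)) x
    · exact Or.inl hreact
    · obtain ⟨ha1, ha2, i', j', hb1, hb2, ii, hii, hcoeff⟩ := hcons hreact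
      exact Or.inr ⟨ha1, ha2, i', j', N.S i' (j':ℕ), hb1, rfl, hb2, r-1, by omega, ii, hii,
        hcoeff⟩
  · intro hreact hr hmin
    obtain ⟨ha1, ha2, i', j', hb1, hb2, ii, hii, hcoeff⟩ := hcons hreact
    exact ⟨i', j', N.S i' (j':ℕ), hb1, rfl, hb2, ii, hii, hcoeff⟩

end A1Network
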